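/- (Statistical Korovkin theorem of Gadjiev–Orhan.) Let a < b be real numbers and let (A_n) be a sequence of positive linear operators from C[a,b] to C[a,b] (linear and monotone: f ≤ g implies A_n f ≤ A_n g). If st-lim_n ‖A_n(e_ν) − e_ν‖_{C[a,b]} = 0 for ν = 0, 1, 2, where e_ν(t) = t^ν and ‖·‖_{C[a,b]} is the supremum norm on [a,b], then st-lim_n ‖A_n(f) − f‖_{C[a,b]} = 0 for every f ∈ C[a,b]. -/

import Mathlib

open scoped BigOperators

noncomputable section

/-- The `q`-integer `[n]_q = ∑_{i=0}^{n-1} q^i`. -/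
def qInt (q : ℝ) (n : ℕ) : ℝ := ∑ i ∈ Finset.range n, q ^ i

/-- The `q`-factorial `[n]_q! = ∏_{j=1}^{n} [j]_q`. -/
def qFact (q : ℝ) (n : ℕ) : ℝ := ∏ j ∈ Finset.range n, qInt q (j + 1)

/-- The `q`-Jackson integral `∫_0^c g(t) d_q t = (1-q) c ∑_{j=0}^∞ q^j g (c q^j)`. -/
def jackson0 (q c : ℝ) (g : ℝ → ℝ) : ℝ := (1 - q) * c * ∑' j : ℕ, q ^ j * g (c * q ^ j)

/-- The `q`-Jackson integral `∫_a^b g(t) d_q t`. -/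
def jackson (q a b : ℝ) (g : ℝ → ℝ) : ℝ := jackson0 q b g - jackson0 q a g

/-- The `q`-derivative operator, with the convention `(D_q g)(0) = 0`. -/
def qD (q : ℝ) (g : ℝ → ℝ) : ℝ → ℝ := fun x =>
  if x = 0 then 0 else (g x - g (q * x)) / ((1 - q) * x)

/-- The weights `w_k(x) = q^{k(k-1)/2} (D_q^k φ)(x) (−x)^k / [k]_q!`. -/
def w (q : ℝ) (φ : ℝ → ℝ) (k : ℕ) (x : ℝ) : ℝ :=
  q ^ (k * (k - 1) / 2) * ((qD q)^[k] φ) x * (-x) ^ k / qFact q k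

/-- Lower node `a_k = q([k]_q + q^{k-1} α)/([n]_q + β)`. -/
def aNode (q α β : ℝ) (n k : ℕ) : ℝ :=
  q * (qInt q k + q ^ ((k : ℤ) - 1) * α) / (qInt q n + β)

/-- Upper node `b_k = ([k+1]_q + q^k α)/([n]_q + β)`. -/
def bNode (q α β : ℝ) (n k : ℕ) : ℝ :=
  (qInt q (k + 1) + q ^ k * α) / (qInt q n + β)

/-- The Stancu type `q`-Baskakov–Kantorovich operator
`L*_n(f; q, x) = ([n]_q + β) ∑_{k=0}^∞ w_k(x) ∫_{a_k}^{b_k} f(q^{1-k} t) d_q t`. -/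
def Lop (q α β : ℝ) (n : ℕ) (φ : ℝ → ℝ) (f : ℝ → ℝ) (x : ℝ) : ℝ :=
  (qInt q n + β) * ∑' k : ℕ, w q φ k x *
    jackson q (aNode q α β n k) (bNode q α β n k) (fun t => f (q ^ (1 - (k : ℤ)) * t))

/-- The moment identities (M) at `x` with parameter `m`. -/
def MomentM (q α β : ℝ) (n m : ℕ) (φ : ℝ → ℝ) (x : ℝ) : Prop :=
  Lop q α β n φ (fun _ => 1) x = 1 ∧
  Lop q α β n φ (fun t => t) x =
    qInt q n * x / (qInt q n + β) + q * (1 + 2 * α) / (qInt q 2 * (qInt q n + β)) ∧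
  Lop q α β n φ (fun t => t ^ 2) x =
    qInt q n * qInt q m * x ^ 2 / (q * (qInt q n + β) ^ 2)
      + qInt q n * (qInt q 3 + q * ((1 + 3 * α) * qInt q 2 + 1)) * x
          / (qInt q 3 * (qInt q n + β) ^ 2)
      + q ^ 2 * (1 + 3 * α + 3 * α ^ 2) / (qInt q 3 * (qInt q n + β) ^ 2)

/-- The quantity `δ_n(x)`. -/
def deltaN (q α β : ℝ) (n m : ℕ) (x : ℝ) : ℝ :=
  (qInt q n * qInt q m / (q * (qInt q n + β) ^ 2) + 1 - 2 * qInt q n / (qInt q n + β)) * x ^ 2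
  + (qInt q n * (qInt q 3 + q * ((1 + 3 * α) * qInt q 2 + 1))
        / (qInt q 3 * (qInt q n + β) ^ 2)
      - 2 * q * (1 + 2 * α) / (qInt q 2 * (qInt q n + β))) * x
  + q ^ 2 * (1 + 3 * α + 3 * α ^ 2) / (qInt q 3 * (qInt q n + β) ^ 2)

open scoped Classical in
/-- Statistical convergence of a real sequence. -/
def StatLim (x : ℕ → ℝ) (L : ℝ) : Prop :=
  ∀ ε > 0, Filter.Tendsto
    (fun n => (((Finset.range n).filter (fun j => ε ≤ |x j - L|)).card : ℝ) / n)
    Filter.atTop (nhds 0)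

open scoped Classical in
/-- Statistical convergence of a real double sequence. -/
def StatLim2 (x : ℕ → ℕ → ℝ) (L : ℝ) : Prop :=
  ∀ ε > 0, Filter.Tendsto
    (fun p : ℕ × ℕ =>
      (((Finset.range p.1 ×ˢ Finset.range p.2).filter
          (fun jk => ε ≤ |x jk.1 jk.2 - L|)).card : ℝ) / (p.1 * p.2))
    Filter.atTop (nhds 0)

/-- Condition (d) on a sequence `(q_n) ⊂ (0,1)`. -/
def CondD (q : ℕ → ℝ) : Prop :=
  StatLim q 1 ∧ (∃ a < (1 : ℝ), StatLim (fun n => q n ^ n) a) ∧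
    StatLim (fun n => 1 / qInt (q n) n) 0

/-- Modulus of continuity on `[0,∞)`. -/
def omegaMod (f : ℝ → ℝ) (δ : ℝ) : ℝ :=
  sSup {d | ∃ t s : ℝ, 0 ≤ t ∧ 0 ≤ s ∧ |t - s| ≤ δ ∧ d = |f t - f s|}

/-- Bivariate modulus of continuity on `[0,∞) × [0,∞)`. -/
def omegaMod2 (f : ℝ → ℝ → ℝ) (δ₁ δ₂ : ℝ) : ℝ :=
  sSup {d | ∃ x' y' x y : ℝ, 0 ≤ x' ∧ 0 ≤ y' ∧ 0 ≤ x ∧ 0 ≤ y ∧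
    |x' - x| ≤ δ₁ ∧ |y' - y| ≤ δ₂ ∧ d = |f x' y' - f x y|}

/-- The bivariate Stancu type `q`-Baskakov–Kantorovich operator. -/
def Lop2 (q₁ q₂ α β : ℝ) (n₁ n₂ : ℕ) (φ₁ φ₂ : ℝ → ℝ) (f : ℝ → ℝ → ℝ) (x y : ℝ) : ℝ :=
  (qInt q₁ n₁ + β) * (qInt q₂ n₂ + β) *
    ∑' k₁ : ℕ, ∑' k₂ : ℕ, w q₁ φ₁ k₁ x * w q₂ φ₂ k₂ y *
      jackson q₁ (aNode q₁ α β n₁ k₁) (bNode q₁ α β n₁ k₁) (fun t =>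
        jackson q₂ (aNode q₂ α β n₂ k₂) (bNode q₂ α β n₂ k₂) (fun s =>
          f (q₁ ^ (1 - (k₁ : ℤ)) * t) (q₂ ^ (1 - (k₂ : ℤ)) * s)))

open scoped Classical in
lemma statLim_of_bound (u v w y : ℕ → ℝ) (hy : ∀ n, 0 ≤ y n)
    (hu : StatLim u 0) (hv : StatLim v 0) (hw : StatLim w 0)
    (h : ∀ ε > 0, ∃ K > 0, ∀ n, y n ≤ ε + K * (u n + v n + w n)) :
    StatLim y 0 := by
  intro ε hε
  obtain ⟨K, hK, hb⟩ := h (ε / 2) (by positivity)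
  set t := ε / (6 * K) with htdef
  have ht : 0 < t := by positivity
  have key : ∀ j : ℕ, ε ≤ |y j - 0| → (t ≤ |u j - 0| ∨ t ≤ |v j - 0| ∨ t ≤ |w j - 0|) := by
    intro j hj
    rw [sub_zero, abs_of_nonneg (hy j)] at hj
    have h1 := hb j
    have hεt : ε = 6 * K * t := by
      rw [htdef]; field_simp
    by_contra hc
    push_neg at hc
    obtain ⟨c1, c2, c3⟩ := hc
    have e1 : u j ≤ |u j - 0| := by rw [sub_zero]; exact le_abs_self _
    have e2 : v j ≤ |v j - 0| := by rw [sub_zero]; exact le_abs_self _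
    have e3 : w j ≤ |w j - 0| := by rw [sub_zero]; exact le_abs_self _
    nlinarith [hK, ht]
  have hcard : ∀ n : ℕ, (((Finset.range n).filter (fun j => ε ≤ |y j - 0|)).card : ℝ) / n ≤
      (((Finset.range n).filter (fun j => t ≤ |u j - 0|)).card : ℝ) / n
      + (((Finset.range n).filter (fun j => t ≤ |v j - 0|)).card : ℝ) / n
      + (((Finset.range n).filter (fun j => t ≤ |w j - 0|)).card : ℝ) / n := by
    intro n
    have hsub : (Finset.range n).filter (fun j => ε ≤ |y j - 0|) ⊆
        (((Finset.range n).filter (fun j => t ≤ |u j - 0|)) ∪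
          ((Finset.range n).filter (fun j => t ≤ |v j - 0|))) ∪
        ((Finset.range n).filter (fun j => t ≤ |w j - 0|)) := by
      intro j hj
      simp only [Finset.mem_filter, Finset.mem_union] at *
      rcases key j hj.2 with h | h | h <;> tauto
    have hc : (((Finset.range n).filter (fun j => ε ≤ |y j - 0|)).card : ℝ) ≤
        (((Finset.range n).filter (fun j => t ≤ |u j - 0|)).card : ℝ)
        + (((Finset.range n).filter (fun j => t ≤ |v j - 0|)).card : ℝ)
        + (((Finset.range n).filter (fun j => t ≤ |w j - 0|)).card : ℝ) := by
      have := (Finset.card_le_card hsub).trans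
        ((Finset.card_union_le _ _).trans
          (Nat.add_le_add_right (Finset.card_union_le _ _) _))
      exact_mod_cast this
    rcases eq_or_ne (n : ℝ) 0 with hn | hn
    · simp [hn]
    · have hn' : (0 : ℝ) < n := lt_of_le_of_ne (Nat.cast_nonneg n) (Ne.symm hn)
      rw [← add_div, ← add_div, div_le_div_iff₀ hn' hn']
      nlinarith [hc, hn']
  exact squeeze_zero (fun n => by positivity) hcard
    (by simpa using ((hu t ht).add (hv t ht)).add (hw t ht))

set_option maxHeartbeats 1000000 in
theorem stmt9 (a b : ℝ) (hab : a < b)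
    (A : ℕ → C(Set.Icc a b, ℝ) →ₗ[ℝ] C(Set.Icc a b, ℝ))
    (hpos : ∀ n (f g : C(Set.Icc a b, ℝ)), f ≤ g → A n f ≤ A n g)
    (e : ℕ → C(Set.Icc a b, ℝ)) (he : ∀ ν (x : Set.Icc a b), e ν x = (x : ℝ) ^ ν)
    (hKorovkin : ∀ ν ≤ 2, StatLim (fun n => ‖A n (e ν) - e ν‖) 0) :
    ∀ f : C(Set.Icc a b, ℝ), StatLim (fun n => ‖A n f - f‖) 0 := by
  intro f
  classical
  set M := ‖f‖ with hM
  have hM0 : 0 ≤ M := norm_nonneg f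
  have hfb : ∀ x : Set.Icc a b, |f x| ≤ M := fun x => by
    simpa [Real.norm_eq_abs] using f.norm_coe_le_norm x
  set c := max |a| |b| with hcdef
  have hc0 : 0 ≤ c := le_trans (abs_nonneg a) (le_max_left _ _)
  have hxc : ∀ x : Set.Icc a b, |(x : ℝ)| ≤ c := by
    rintro ⟨x, hx1, hx2⟩
    simp only
    rw [abs_le]
    constructor
    · calc -(max |a| |b|) ≤ -|a| := neg_le_neg (le_max_left _ _)
        _ ≤ a := neg_abs_le a
        _ ≤ x := hx1
    · exact hx2.trans ((le_abs_self b).trans (le_max_right _ _))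
  apply statLim_of_bound _ _ _ _ (fun n => norm_nonneg _)
    (hKorovkin 0 (by norm_num)) (hKorovkin 1 (by norm_num)) (hKorovkin 2 (by norm_num))
  intro ε hε
  have hunif : UniformContinuous f := CompactSpace.uniformContinuous_of_continuous f.continuous
  obtain ⟨δ, hδ, hδ'⟩ := Metric.uniformContinuous_iff.mp hunif ε hε
  set C := 2 * M / δ ^ 2 with hCdef
  have hC0 : 0 ≤ C := by positivity
  have hpt : ∀ t x : Set.Icc a b, |f t - f x| ≤ ε + C * ((t : ℝ) - x) ^ 2 := by
    intro t x
    by_cases hd : dist t x < δ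
    · have h1 : dist (f t) (f x) < ε := hδ' hd
      rw [Real.dist_eq] at h1
      nlinarith [sq_nonneg ((t : ℝ) - x), hC0, h1]
    · push_neg at hd
      have hdist : dist t x = |(t : ℝ) - x| := by
        rw [Subtype.dist_eq, Real.dist_eq]
      have h2 : δ ^ 2 ≤ ((t : ℝ) - x) ^ 2 := by
        rw [← sq_abs ((t : ℝ) - x)]
        apply pow_le_pow_left₀ hδ.le
        rw [← hdist]; exact hd
      have hft := hfb t
      have hfx := hfb x
      have h3 : |f t - f x| ≤ 2 * M := by
        calc |f t - f x| ≤ |f t| + |f x| := abs_sub _ _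
          _ ≤ 2 * M := by linarith
      have h4 : C * δ ^ 2 = 2 * M := by
        rw [hCdef]; field_simp
      have h5 : C * δ ^ 2 ≤ C * ((t : ℝ) - x) ^ 2 := mul_le_mul_of_nonneg_left h2 hC0
      linarith
  refine ⟨ε + C * c ^ 2 + 2 * C * c + C + M + 1, by positivity, ?_⟩
  set K := ε + C * c ^ 2 + 2 * C * c + C + M + 1 with hKdef
  intro n
  set N0 := ‖A n (e 0) - e 0‖ with hN0def
  set N1 := ‖A n (e 1) - e 1‖ with hN1def
  set N2 := ‖A n (e 2) - e 2‖ with hN2def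
  have hN0 : 0 ≤ N0 := norm_nonneg _
  have hN1 : 0 ≤ N1 := norm_nonneg _
  have hN2 : 0 ≤ N2 := norm_nonneg _
  rw [ContinuousMap.norm_le _ (by positivity)]
  intro x
  rw [ContinuousMap.sub_apply, Real.norm_eq_abs]
  -- the test function g(t) = ε + C (t - x)^2 expressed via e 0, e 1, e 2
  set g : C(Set.Icc a b, ℝ) :=
    (ε + C * (x : ℝ) ^ 2) • e 0 - (2 * C * (x : ℝ)) • e 1 + C • e 2 with hgdef
  have hg_apply : ∀ t : Set.Icc a b,
      g t = ε + C * (x : ℝ) ^ 2 - 2 * C * (x : ℝ) * (t : ℝ) + C * (t : ℝ) ^ 2 := by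
    intro t
    simp only [hgdef, ContinuousMap.add_apply, ContinuousMap.sub_apply,
      ContinuousMap.smul_apply, smul_eq_mul, he, pow_zero, pow_one, mul_one]
    try ring
  have hle1 : f - f x • e 0 ≤ g := by
    rw [ContinuousMap.le_def]
    intro t
    have h1 := (abs_le.mp (hpt t x)).2
    simp only [ContinuousMap.sub_apply, ContinuousMap.smul_apply, smul_eq_mul, he, pow_zero,
      mul_one, hg_apply]
    nlinarith [h1]
  have hle2 : -g ≤ f - f x • e 0 := by
    rw [ContinuousMap.le_def]
    intro t
    have h1 := (abs_le.mp (hpt t x)).1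
    simp only [ContinuousMap.sub_apply, ContinuousMap.smul_apply, ContinuousMap.neg_apply,
      smul_eq_mul, he, pow_zero, mul_one, hg_apply]
    nlinarith [h1]
  have hA1 := hpos n _ _ hle1
  have hA2 := hpos n _ _ hle2
  rw [map_sub, map_smul] at hA1 hA2
  rw [map_neg] at hA2
  have hub : (A n f) x - f x * (A n (e 0)) x ≤ (A n g) x := by
    have := (ContinuousMap.le_def.mp hA1) x
    simpa [smul_eq_mul] using this
  have hlb : -((A n g) x) ≤ (A n f) x - f x * (A n (e 0)) x := by
    have := (ContinuousMap.le_def.mp hA2) x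
    simpa [smul_eq_mul] using this
  have habs : |(A n f) x - f x * (A n (e 0)) x| ≤ (A n g) x :=
    abs_le.mpr ⟨by linarith, hub⟩
  have hAg : (A n g) x = (ε + C * (x : ℝ) ^ 2) * (A n (e 0)) x
      - 2 * C * (x : ℝ) * (A n (e 1)) x + C * (A n (e 2)) x := by
    rw [hgdef, map_add, map_sub, map_smul, map_smul, map_smul]
    simp [smul_eq_mul]
  set D0 := (A n (e 0)) x - 1 with hD0def
  set D1 := (A n (e 1)) x - (x : ℝ) with hD1def
  set D2 := (A n (e 2)) x - (x : ℝ) ^ 2 with hD2def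
  have hd0 : |D0| ≤ N0 := by
    have h := (A n (e 0) - e 0).norm_coe_le_norm x
    simpa [hD0def, he, Real.norm_eq_abs] using h
  have hd1 : |D1| ≤ N1 := by
    have h := (A n (e 1) - e 1).norm_coe_le_norm x
    simpa [hD1def, he, Real.norm_eq_abs] using h
  have hd2 : |D2| ≤ N2 := by
    have h := (A n (e 2) - e 2).norm_coe_le_norm x
    simpa [hD2def, he, Real.norm_eq_abs] using h
  have hx2 : (x : ℝ) ^ 2 ≤ c ^ 2 := by
    rw [← sq_abs]
    exact pow_le_pow_left₀ (abs_nonneg _) (hxc x) 2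
  -- bound each term of (A n g) x
  have hb0 : (ε + C * (x : ℝ) ^ 2) * D0 ≤ (ε + C * c ^ 2) * N0 := by
    have h1 : (ε + C * (x : ℝ) ^ 2) * D0 ≤ (ε + C * (x : ℝ) ^ 2) * |D0| :=
      mul_le_mul_of_nonneg_left (le_abs_self _)
        (by linarith [mul_nonneg hC0 (sq_nonneg (x : ℝ))])
    have h2 : (ε + C * (x : ℝ) ^ 2) * |D0| ≤ (ε + C * c ^ 2) * N0 :=
      mul_le_mul (by linarith [mul_le_mul_of_nonneg_left hx2 hC0]) hd0 (abs_nonneg _)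
        (by linarith [mul_nonneg hC0 (sq_nonneg c)])
    linarith
  have hb1 : -(2 * C * (x : ℝ) * D1) ≤ 2 * C * c * N1 := by
    have h1 : -(2 * C * (x : ℝ) * D1) ≤ |2 * C * (x : ℝ) * D1| := neg_le_abs _
    have h2 : |2 * C * (x : ℝ) * D1| = 2 * C * |(x : ℝ)| * |D1| := by
      rw [abs_mul, abs_mul, abs_mul]
      rw [abs_of_nonneg (by norm_num : (0:ℝ) ≤ 2), abs_of_nonneg hC0]
    have h3 : 2 * C * |(x : ℝ)| * |D1| ≤ 2 * C * c * N1 :=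
      mul_le_mul
        (by linarith [mul_le_mul_of_nonneg_left (hxc x) (by linarith : (0:ℝ) ≤ 2 * C)])
        hd1 (abs_nonneg _) (by positivity)
    linarith [h2 ▸ h1]
  have hb2 : C * D2 ≤ C * N2 :=
    (mul_le_mul_of_nonneg_left ((le_abs_self _).trans hd2) hC0)
  have hAgb : (A n g) x ≤ ε + (ε + C * c ^ 2) * N0 + 2 * C * c * N1 + C * N2 := by
    have hexp : (A n g) x = ε + (ε + C * (x : ℝ) ^ 2) * D0 - 2 * C * (x : ℝ) * D1 + C * D2 := by
      rw [hAg, hD0def, hD1def, hD2def]; ring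
    linarith [hb0, hb1, hb2, hexp.le, hexp.ge]
  have hsplit : |(A n f) x - f x| ≤ |(A n f) x - f x * (A n (e 0)) x| + M * |D0| := by
    have heq : (A n f) x - f x = ((A n f) x - f x * (A n (e 0)) x) + f x * D0 := by
      rw [hD0def]; ring
    calc |(A n f) x - f x| ≤ |(A n f) x - f x * (A n (e 0)) x| + |f x * D0| := by
          rw [heq]; exact abs_add_le _ _
      _ ≤ _ := by
          rw [abs_mul]
          have := mul_le_mul_of_nonneg_right (hfb x) (abs_nonneg D0)
          linarith
  have hfinal : |(A n f) x - f x| ≤ ε + K * (N0 + N1 + N2) := by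
    have hMD0 : M * |D0| ≤ M * N0 := mul_le_mul_of_nonneg_left hd0 hM0
    have hCc : 0 ≤ C * c := mul_nonneg hC0 hc0
    have hCc2 : 0 ≤ C * c ^ 2 := mul_nonneg hC0 (sq_nonneg c)
    have hcoef0 : (ε + C * c ^ 2 + M) * N0 ≤ K * N0 :=
      mul_le_mul_of_nonneg_right (by rw [hKdef]; linarith) hN0
    have hcoef1 : 2 * C * c * N1 ≤ K * N1 :=
      mul_le_mul_of_nonneg_right (by rw [hKdef]; linarith) hN1
    have hcoef2 : C * N2 ≤ K * N2 :=
      mul_le_mul_of_nonneg_right (by rw [hKdef]; linarith) hN2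
    linarith [hsplit, habs, hAgb, hMD0, hcoef0, hcoef1, hcoef2]
  exact hfinal

end
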